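/- arXiv:1711.06006 — 2 statements merged into one kernel-verified Lean document; each statement's English description precedes it below -/
import Mathlib

section
/- Consistency of the weighted per-decision hindsight estimator: the estimator in which, for each alternative goal g and each pair of time steps (t, t'), the importance weight ∏_{k=1}^{t'−1} p(a_k^(i)|s_k^(i),g,θ)/p(a_k^(i)|s_k^(i),g^(i),θ) is normalized by the sum of the corresponding weights over all N trajectories, converges almost surely to ∇η(θ) as N → ∞. -/
open Finset

/-- A trajectory `s_1, a_1, …, s_T` with horizon `T = n + 1`. -/
abbrev Traj (S A : Type) (n : ℕ) := (Fin (n + 1) → S) × (Fin n → A)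

/-- `p(τ ∣ g, θ) = p(s_1) ∏_{t=1}^{T-1} p(a_t ∣ s_t, g, θ) p(s_{t+1} ∣ s_t, a_t)`. -/
def trajProb {S A G : Type} (n : ℕ) (init : S → ℝ) (trans : S → A → S → ℝ)
    (pol : ℝ → G → S → A → ℝ) (θ : ℝ) (g : G) (τ : Traj S A n) : ℝ :=
  init (τ.1 0) * ∏ t : Fin n,
    pol θ g (τ.1 t.castSucc) (τ.2 t) * trans (τ.1 t.castSucc) (τ.2 t) (τ.1 t.succ)

/-- The expected return `η(θ) = ∑_g p(g) ∑_τ p(τ ∣ g, θ) ∑_{t=1}^T r(s_t, g)`. -/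
def expReturn {S A G : Type} [Fintype S] [Fintype A] [Fintype G] (n : ℕ)
    (init : S → ℝ) (trans : S → A → S → ℝ) (pol : ℝ → G → S → A → ℝ)
    (pG : G → ℝ) (r : S → G → ℝ) (θ : ℝ) : ℝ :=
  ∑ g : G, pG g * ∑ τ : Traj S A n,
    trajProb n init trans pol θ g τ * ∑ t : Fin (n + 1), r (τ.1 t) g

open MeasureTheory ProbabilityTheory Filter

namespace HindsightAux

variable {S A : Type} [Fintype S] [Fintype A]

def snocTraj (N : ℕ) : (Traj S A N × (A × S)) ≃ Traj S A (N + 1) where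
  toFun p := (Fin.snoc p.1.1 p.2.2, Fin.snoc p.1.2 p.2.1)
  invFun τ := ((Fin.init τ.1, Fin.init τ.2), (τ.2 (Fin.last N), τ.1 (Fin.last (N + 1))))
  left_inv p := by ext <;> simp [Fin.init_snoc, Fin.snoc_last]
  right_inv τ := by ext <;> simp [Fin.snoc_init_self, Fin.snoc_last]

lemma traj_sum_succ (N : ℕ) (f : Traj S A (N + 1) → ℝ) :
    ∑ τ : Traj S A (N + 1), f τ
      = ∑ τ : Traj S A N, ∑ a : A, ∑ s : S, f (Fin.snoc τ.1 s, Fin.snoc τ.2 a) := by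
  rw [← Fintype.sum_equiv (snocTraj N) _ f (fun p => rfl)]
  rw [Fintype.sum_prod_type]
  refine Finset.sum_congr rfl fun τ _ => ?_
  rw [Fintype.sum_prod_type]
  simp [snocTraj]

/-- The generic weighted trajectory sum. -/
def trajSum (N : ℕ) (init : S → ℝ) (c : Fin N → S → A → S → ℝ) (F : Traj S A N → ℝ) : ℝ :=
  ∑ τ : Traj S A N,
    init (τ.1 0) * (∏ k : Fin N, c k (τ.1 k.castSucc) (τ.2 k) (τ.1 k.succ)) * F τ

lemma peel (N : ℕ) (init : S → ℝ) (c : Fin (N + 1) → S → A → S → ℝ)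
    (F : Traj S A (N + 1) → ℝ) (F' : Traj S A N → ℝ)
    (hF : ∀ (u : Fin (N + 1) → S) (b : Fin N → A) (s : S) (a : A),
      F (Fin.snoc u s, Fin.snoc b a) = F' (u, b)) :
    trajSum (N + 1) init c F
      = ∑ τ : Traj S A N,
          init (τ.1 0) * (∏ k : Fin N, c k.castSucc (τ.1 k.castSucc) (τ.2 k) (τ.1 k.succ)) *
            ((∑ a : A, ∑ s : S, c (Fin.last N) (τ.1 (Fin.last N)) a s) * F' τ) := by
  rw [trajSum, traj_sum_succ]
  refine Finset.sum_congr rfl fun τ _ => ?_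
  have hzero : ∀ s : S, (Fin.snoc τ.1 s : Fin (N + 2) → S) 0 = τ.1 0 := by
    intro s
    have h : (0 : Fin (N + 2)) = Fin.castSucc 0 := rfl
    rw [h, Fin.snoc_castSucc]
  have hprod : ∀ (s : S) (a : A),
      (∏ k : Fin (N + 1), c k ((Fin.snoc τ.1 s : Fin (N+2) → S) k.castSucc)
        ((Fin.snoc τ.2 a : Fin (N+1) → A) k) ((Fin.snoc τ.1 s : Fin (N+2) → S) k.succ))
      = (∏ k : Fin N, c k.castSucc (τ.1 k.castSucc) (τ.2 k) (τ.1 k.succ)) *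
          c (Fin.last N) (τ.1 (Fin.last N)) a s := by
    intro s a
    rw [Fin.prod_univ_castSucc]
    congr 1
    · exact Finset.prod_congr rfl fun k _ => by
        rw [Fin.snoc_castSucc, Fin.snoc_castSucc, Fin.succ_castSucc, Fin.snoc_castSucc]
    · rw [Fin.snoc_castSucc, Fin.snoc_last, Fin.succ_last, Fin.snoc_last]
  simp only [hF, hprod, hzero]
  simp only [Finset.mul_sum, Finset.sum_mul]
  exact Finset.sum_congr rfl fun a _ => Finset.sum_congr rfl fun s _ => by ring



lemma snoc_lt {α : Type*} {M : ℕ} (u : Fin M → α) (x : α) (j : Fin (M + 1))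
    (hj : (j : ℕ) < M) :
    (Fin.snoc u x : Fin (M + 1) → α) j = u ⟨(j : ℕ), hj⟩ := by
  cases j using Fin.lastCases with
  | last => simp at hj
  | cast i =>
    rw [Fin.snoc_castSucc]
    congr 1

lemma prob_sum (init : S → ℝ) (hinit1 : ∑ s : S, init s = 1) :
    ∀ (N : ℕ) (c : Fin N → S → A → S → ℝ),
      (∀ (k : Fin N) (s : S), ∑ a : A, ∑ s' : S, c k s a s' = 1) →
      trajSum N init c (fun _ => 1) = 1 := by
  intro N
  induction N with
  | zero =>
    intro c hc
    rw [trajSum, Fintype.sum_prod_type]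
    have h1 : ∀ v : Fin 1 → S,
        (∑ b : Fin 0 → A, init (v 0) *
          (∏ k : Fin 0, c k (v k.castSucc) (b k) (v k.succ)) * 1) = init (v 0) := by
      intro v
      simp
    rw [Finset.sum_congr rfl fun v _ => h1 v]
    rw [← hinit1]
    exact Fintype.sum_equiv (Equiv.funUnique (Fin 1) S) _ _ (fun v => rfl)
  | succ N ih =>
    intro c hc
    rw [peel N init c _ (fun _ => 1) (fun u b s a => rfl)]
    have h2 := ih (fun k => c k.castSucc) (fun k s => hc k.castSucc s)
    rw [trajSum] at h2
    refine Eq.trans ?_ h2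
    refine Finset.sum_congr rfl fun τ _ => ?_
    rw [hc (Fin.last N) (τ.1 (Fin.last N))]
    ring

lemma invar (init : S → ℝ) :
    ∀ (N m : ℕ) (c c' : Fin N → S → A → S → ℝ),
      (∀ k : Fin N, m ≤ (k : ℕ) → ∀ s : S, ∑ a : A, ∑ s' : S, c k s a s' = 1) →
      (∀ k : Fin N, m ≤ (k : ℕ) → ∀ s : S, ∑ a : A, ∑ s' : S, c' k s a s' = 1) →
      (∀ k : Fin N, (k : ℕ) < m → c k = c' k) →
      ∀ F : Traj S A N → ℝ,
      (∀ τ τ' : Traj S A N, (∀ j : Fin (N + 1), (j : ℕ) ≤ m → τ.1 j = τ'.1 j) →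
        (∀ k : Fin N, (k : ℕ) < m → τ.2 k = τ'.2 k) → F τ = F τ') →
      trajSum N init c F = trajSum N init c' F := by
  intro N
  induction N with
  | zero =>
    intro m c c' _ _ _ F _
    rw [trajSum, trajSum]
    refine Finset.sum_congr rfl fun τ _ => ?_
    simp only [Finset.univ_eq_empty, Finset.prod_empty]
  | succ N ih =>
    intro m c c' hc hc' hagree F hF
    rcases le_or_gt (N + 1) m with hm | hm
    · rw [trajSum, trajSum]
      refine Finset.sum_congr rfl fun τ _ => ?_
      congr 2
      exact Finset.prod_congr rfl fun k _ => by
        rw [hagree k (lt_of_lt_of_le k.isLt hm)]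
    · have hmN : m ≤ N := Nat.lt_succ_iff.mp hm
      rcases isEmpty_or_nonempty S with hS | hS
      · haveI : IsEmpty (Traj S A (N + 1)) := ⟨fun τ => hS.false (τ.1 0)⟩
        simp only [trajSum, Finset.univ_eq_empty, Finset.sum_empty]
      obtain ⟨s0⟩ := hS
      have hA : Nonempty A := by
        by_contra hAe
        rw [not_nonempty_iff] at hAe
        have h1 := hc (Fin.last N) (by simpa using hmN) s0
        simp [Finset.univ_eq_empty] at h1
      obtain ⟨a0⟩ := hA
      set F' : Traj S A N → ℝ := fun τ => F (Fin.snoc τ.1 s0, Fin.snoc τ.2 a0) with hF'def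
      have hF' : ∀ (u : Fin (N + 1) → S) (b : Fin N → A) (s : S) (a : A),
          F (Fin.snoc u s, Fin.snoc b a) = F' (u, b) := by
        intro u b s a
        apply hF
        · intro j hj
          dsimp only
          rw [snoc_lt u s j (by omega), snoc_lt u s0 j (by omega)]
        · intro k hk
          dsimp only
          rw [snoc_lt b a k (by omega), snoc_lt b a0 k (by omega)]
      have hF'new : ∀ τ τ' : Traj S A N,
          (∀ j : Fin (N + 1), (j : ℕ) ≤ m → τ.1 j = τ'.1 j) →
          (∀ k : Fin N, (k : ℕ) < m → τ.2 k = τ'.2 k) → F' τ = F' τ' := by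
        intro τ τ' h1 h2
        apply hF
        · intro j hj
          dsimp only
          rw [snoc_lt _ s0 j (by omega), snoc_lt _ s0 j (by omega)]
          exact h1 ⟨(j : ℕ), by omega⟩ (by simpa using hj)
        · intro k hk
          dsimp only
          rw [snoc_lt _ a0 k (by omega), snoc_lt _ a0 k (by omega)]
          exact h2 ⟨(k : ℕ), by omega⟩ (by simpa using hk)
      have e1 : trajSum (N + 1) init c F
          = trajSum N init (fun k => c k.castSucc) F' := by
        rw [peel N init c F F' hF', trajSum]
        refine Finset.sum_congr rfl fun τ _ => ?_
        rw [hc (Fin.last N) (by simpa using hmN) (τ.1 (Fin.last N)), one_mul]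
      have e2 : trajSum (N + 1) init c' F
          = trajSum N init (fun k => c' k.castSucc) F' := by
        rw [peel N init c' F F' hF', trajSum]
        refine Finset.sum_congr rfl fun τ _ => ?_
        rw [hc' (Fin.last N) (by simpa using hmN) (τ.1 (Fin.last N)), one_mul]
      rw [e1, e2]
      exact ih m _ _ (fun k hk s => hc k.castSucc (by simpa using hk) s)
        (fun k hk s => hc' k.castSucc (by simpa using hk) s)
        (fun k hk => hagree k.castSucc (by simpa using hk)) F' hF'new

lemma zero_sum (init : S → ℝ) :
    ∀ (N m : ℕ) (c : Fin N → S → A → S → ℝ), m < N →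
      (∀ k : Fin N, m < (k : ℕ) → ∀ s : S, ∑ a : A, ∑ s' : S, c k s a s' = 1) →
      (∀ k : Fin N, (k : ℕ) = m → ∀ s : S, ∑ a : A, ∑ s' : S, c k s a s' = 0) →
      ∀ F : Traj S A N → ℝ,
      (∀ τ τ' : Traj S A N, (∀ j : Fin (N + 1), (j : ℕ) ≤ m → τ.1 j = τ'.1 j) →
        (∀ k : Fin N, (k : ℕ) < m → τ.2 k = τ'.2 k) → F τ = F τ') →
      trajSum N init c F = 0 := by
  intro N
  induction N with
  | zero => intro m c hm; omega
  | succ N ih =>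
    intro m c hm hc hz F hF
    rcases isEmpty_or_nonempty S with hS | hS
    · haveI : IsEmpty (Traj S A (N + 1)) := ⟨fun τ => hS.false (τ.1 0)⟩
      rw [trajSum, Finset.univ_eq_empty, Finset.sum_empty]
    obtain ⟨s0⟩ := hS
    rcases isEmpty_or_nonempty A with hA | hA
    · haveI : IsEmpty (Traj S A (N + 1)) := ⟨fun τ => hA.false (τ.2 0)⟩
      rw [trajSum, Finset.univ_eq_empty, Finset.sum_empty]
    obtain ⟨a0⟩ := hA
    have hmN : m ≤ N := Nat.lt_succ_iff.mp hm
    set F' : Traj S A N → ℝ := fun τ => F (Fin.snoc τ.1 s0, Fin.snoc τ.2 a0) with hF'def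
    have hF' : ∀ (u : Fin (N + 1) → S) (b : Fin N → A) (s : S) (a : A),
        F (Fin.snoc u s, Fin.snoc b a) = F' (u, b) := by
      intro u b s a
      apply hF
      · intro j hj
        dsimp only
        rw [snoc_lt u s j (by omega), snoc_lt u s0 j (by omega)]
      · intro k hk
        dsimp only
        rw [snoc_lt b a k (by omega), snoc_lt b a0 k (by omega)]
    rw [peel N init c F F' hF']
    rcases eq_or_lt_of_le hmN with hmN' | hmN' 
    · refine Finset.sum_eq_zero fun τ _ => ?_
      rw [hz (Fin.last N) (by simp [hmN'.symm]) (τ.1 (Fin.last N))]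
      ring
    · have hF'new : ∀ τ τ' : Traj S A N,
          (∀ j : Fin (N + 1), (j : ℕ) ≤ m → τ.1 j = τ'.1 j) →
          (∀ k : Fin N, (k : ℕ) < m → τ.2 k = τ'.2 k) → F' τ = F' τ' := by
        intro τ τ' h1 h2
        apply hF
        · intro j hj
          dsimp only
          rw [snoc_lt _ s0 j (by omega), snoc_lt _ s0 j (by omega)]
          exact h1 ⟨(j : ℕ), by omega⟩ (by simpa using hj)
        · intro k hk
          dsimp only
          rw [snoc_lt _ a0 k (by omega), snoc_lt _ a0 k (by omega)]
          exact h2 ⟨(k : ℕ), by omega⟩ (by simpa using hk)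
      have e1 : (∑ τ : Traj S A N,
          init (τ.1 0) * (∏ k : Fin N, c k.castSucc (τ.1 k.castSucc) (τ.2 k) (τ.1 k.succ)) *
            ((∑ a : A, ∑ s : S, c (Fin.last N) (τ.1 (Fin.last N)) a s) * F' τ))
          = trajSum N init (fun k => c k.castSucc) F' := by
        rw [trajSum]
        refine Finset.sum_congr rfl fun τ _ => ?_
        rw [hc (Fin.last N) (by simpa using hmN') (τ.1 (Fin.last N)), one_mul]
      rw [e1]
      exact ih m _ hmN' (fun k hk s => hc k.castSucc (by simpa using hk) s)
        (fun k hk s => hz k.castSucc (by simpa using hk) s) F' hF'new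



open MeasureTheory ProbabilityTheory Filter in
lemma slln_aux {Ω : Type} [MeasurableSpace Ω] (Pm : Measure Ω) [IsProbabilityMeasure Pm]
    {α : Type} [Fintype α] [MeasurableSpace α] [DiscreteMeasurableSpace α]
    (X : ℕ → Ω → α) (hXm : ∀ i, Measurable (X i))
    (hindep : iIndepFun X Pm)
    (hmap : ∀ i (x : α), Pm.map (X i) {x} = Pm.map (X 0) {x})
    (f : α → ℝ) :
    ∀ᵐ ω ∂Pm, Filter.Tendsto (fun N : ℕ => (∑ i ∈ Finset.range N, f (X i ω)) / N)
      Filter.atTop (nhds (∑ x : α, (Pm.map (X 0) {x}).toReal * f x)) := by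
  have hfm : Measurable f := .of_discrete
  have hmapeq : ∀ i, Pm.map (X i) = Pm.map (X 0) := fun i =>
    MeasureTheory.Measure.ext_of_singleton (fun x => hmap i x)
  haveI : IsProbabilityMeasure (Pm.map (X 0)) :=
    Measure.isProbabilityMeasure_map (hXm 0).aemeasurable
  have hfint : Integrable f (Pm.map (X 0)) := .of_finite
  have hint : Integrable (fun ω => f (X 0 ω)) Pm := by
    have := (integrable_map_measure hfm.aestronglyMeasurable (hXm 0).aemeasurable).mp hfint
    exact this
  have hident : ∀ i, IdentDistrib (fun ω => f (X i ω)) (fun ω => f (X 0 ω)) Pm Pm := by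
    intro i
    refine ⟨(hfm.comp (hXm i)).aemeasurable, (hfm.comp (hXm 0)).aemeasurable, ?_⟩
    show Pm.map (f ∘ X i) = Pm.map (f ∘ X 0)
    rw [← Measure.map_map hfm (hXm i), ← Measure.map_map hfm (hXm 0), hmapeq i]
  have hpair : Pairwise (Function.onFun (IndepFun · · Pm) (fun i ω => f (X i ω))) := by
    intro i j hij
    exact (hindep.comp (fun _ => f) (fun _ => hfm)).indepFun hij
  have hlaw := strong_law_ae_real (fun i ω => f (X i ω)) hint hpair hident
  have hE : (∫ ω, f (X 0 ω) ∂Pm) = ∑ x : α, (Pm.map (X 0) {x}).toReal * f x := by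
    rw [← integral_map (hXm 0).aemeasurable hfm.aestronglyMeasurable,
      integral_fintype _]
    simp [smul_eq_mul, Measure.real]
    exact hfint
  rw [← hE]
  exact hlaw

variable {G : Type}

/-- Pointwise: the `g'`-trajectory probability times the per-decision weight is the
mixed-policy product. -/
lemma mix_pointwise (n : ℕ) (init : S → ℝ) (trans : S → A → S → ℝ)
    (pol : ℝ → G → S → A → ℝ) (θ : ℝ)
    (hpol : ∀ (θ' : ℝ) (g : G) (s : S) (a : A), 0 < pol θ' g s a)
    (g g' : G) (t' : Fin (n + 1)) (τ : Traj S A n) :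
    trajProb n init trans pol θ g' τ *
      (∏ k : Fin n, if k.castSucc < t' then
          pol θ g (τ.1 k.castSucc) (τ.2 k) / pol θ g' (τ.1 k.castSucc) (τ.2 k) else 1)
    = init (τ.1 0) * ∏ k : Fin n,
        (if k.castSucc < t' then pol θ g (τ.1 k.castSucc) (τ.2 k)
          else pol θ g' (τ.1 k.castSucc) (τ.2 k)) *
          trans (τ.1 k.castSucc) (τ.2 k) (τ.1 k.succ) := by
  rw [trajProb, mul_assoc, ← Finset.prod_mul_distrib]
  congr 1
  refine Finset.prod_congr rfl fun k _ => ?_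
  by_cases h : k.castSucc < t'
  · rw [if_pos h, if_pos h]
    field_simp [(hpol θ g' (τ.1 k.castSucc) (τ.2 k)).ne']
  · rw [if_neg h, if_neg h, mul_one]

lemma mix_norm (n : ℕ) (trans : S → A → S → ℝ) (pol : ℝ → G → S → A → ℝ) (θ : ℝ)
    (htrans1 : ∀ s a, ∑ s' : S, trans s a s' = 1)
    (hpol1 : ∀ (θ' : ℝ) (g : G) (s : S), ∑ a : A, pol θ' g s a = 1)
    (g g' : G) (t' : Fin (n + 1)) (k : Fin n) (s : S) :
    ∑ a : A, ∑ s' : S,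
      ((if k.castSucc < t' then pol θ g s a else pol θ g' s a) * trans s a s') = 1 := by
  have h1 : ∀ (p : ℝ) (a : A), ∑ s' : S, p * trans s a s' = p := by
    intro p a
    rw [← Finset.mul_sum, htrans1, mul_one]
  by_cases h : k.castSucc < t'
  · simp only [if_pos h, h1]
    exact hpol1 θ g s
  · simp only [if_neg h, h1]
    exact hpol1 θ g' s

/-- Denominator expectation: the conditional weight integrates to 1. -/
lemma den_one (n : ℕ) (init : S → ℝ) (trans : S → A → S → ℝ)
    (pol : ℝ → G → S → A → ℝ) (θ : ℝ)
    (hinit1 : ∑ s : S, init s = 1)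
    (htrans1 : ∀ s a, ∑ s' : S, trans s a s' = 1)
    (hpol : ∀ (θ' : ℝ) (g : G) (s : S) (a : A), 0 < pol θ' g s a)
    (hpol1 : ∀ (θ' : ℝ) (g : G) (s : S), ∑ a : A, pol θ' g s a = 1)
    (g g' : G) (t' : Fin (n + 1)) :
    ∑ τ : Traj S A n, trajProb n init trans pol θ g' τ *
      (∏ k : Fin n, if k.castSucc < t' then
          pol θ g (τ.1 k.castSucc) (τ.2 k) / pol θ g' (τ.1 k.castSucc) (τ.2 k) else 1) = 1 := by
  have := prob_sum init hinit1 n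
    (fun k s a s' => (if k.castSucc < t' then pol θ g s a else pol θ g' s a) * trans s a s')
    (fun k s => mix_norm n trans pol θ htrans1 hpol1 g g' t' k s)
  rw [trajSum] at this
  refine Eq.trans ?_ this
  refine Finset.sum_congr rfl fun τ _ => ?_
  rw [mix_pointwise n init trans pol θ hpol g g' t' τ, mul_one]

/-- Numerator expectation: the weight exactly cancels, for prefix-measurable `F`. -/
lemma num_eq (n : ℕ) (init : S → ℝ) (trans : S → A → S → ℝ)
    (pol : ℝ → G → S → A → ℝ) (θ : ℝ)
    (htrans1 : ∀ s a, ∑ s' : S, trans s a s' = 1)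
    (hpol : ∀ (θ' : ℝ) (g : G) (s : S) (a : A), 0 < pol θ' g s a)
    (hpol1 : ∀ (θ' : ℝ) (g : G) (s : S), ∑ a : A, pol θ' g s a = 1)
    (g g' : G) (t' : Fin (n + 1)) (F : Traj S A n → ℝ)
    (hF : ∀ τ τ' : Traj S A n, (∀ j : Fin (n + 1), (j : ℕ) ≤ (t' : ℕ) → τ.1 j = τ'.1 j) →
      (∀ k : Fin n, (k : ℕ) < (t' : ℕ) → τ.2 k = τ'.2 k) → F τ = F τ') :
    ∑ τ : Traj S A n, trajProb n init trans pol θ g' τ *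
      (∏ k : Fin n, if k.castSucc < t' then
          pol θ g (τ.1 k.castSucc) (τ.2 k) / pol θ g' (τ.1 k.castSucc) (τ.2 k) else 1) * F τ
    = ∑ τ : Traj S A n, trajProb n init trans pol θ g τ * F τ := by
  have hpure : ∀ (k : Fin n) (s : S),
      ∑ a : A, ∑ s' : S, pol θ g s a * trans s a s' = 1 := by
    intro k s
    have h1 : ∀ a : A, ∑ s' : S, pol θ g s a * trans s a s' = pol θ g s a := by
      intro a
      rw [← Finset.mul_sum, htrans1, mul_one]
    simp only [h1]
    exact hpol1 θ g s
  have hagree : ∀ k : Fin n, (k : ℕ) < (t' : ℕ) →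
      (fun (s : S) (a : A) (s' : S) =>
        (if k.castSucc < t' then pol θ g s a else pol θ g' s a) * trans s a s')
      = fun (s : S) (a : A) (s' : S) => pol θ g s a * trans s a s' := by
    intro k hk
    funext s a s'
    rw [if_pos (by rwa [Fin.lt_def, Fin.coe_castSucc])]
  have hinv := invar init n (t' : ℕ)
    (fun k s a s' => (if k.castSucc < t' then pol θ g s a else pol θ g' s a) * trans s a s')
    (fun k s a s' => pol θ g s a * trans s a s')
    (fun k _ s => mix_norm n trans pol θ htrans1 hpol1 g g' t' k s)
    (fun k _ s => hpure k s)
    (fun k hk => hagree k hk) F hF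
  rw [trajSum, trajSum] at hinv
  refine Eq.trans (Eq.trans ?_ hinv) ?_
  · refine Finset.sum_congr rfl fun τ _ => ?_
    rw [← mix_pointwise n init trans pol θ hpol g g' t' τ]
  · refine Finset.sum_congr rfl fun τ _ => ?_
    rw [trajProb]

lemma dlog (pol : ℝ → G → S → A → ℝ) (θ : ℝ)
    (hpol : ∀ (θ' : ℝ) (g : G) (s : S) (a : A), 0 < pol θ' g s a)
    (hpold : ∀ (g : G) (s : S) (a : A), Differentiable ℝ fun θ' => pol θ' g s a)
    (g : G) (s : S) (a : A) :
    deriv (fun θ'' => Real.log (pol θ'' g s a)) θ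
      = deriv (fun θ' => pol θ' g s a) θ / pol θ g s a :=
  (((hpold g s a).differentiableAt.hasDerivAt).log (hpol θ g s a).ne').deriv

lemma dpol_sum_zero (pol : ℝ → G → S → A → ℝ) (θ : ℝ)
    (hpold : ∀ (g : G) (s : S) (a : A), Differentiable ℝ fun θ' => pol θ' g s a)
    (hpol1 : ∀ (θ' : ℝ) (g : G) (s : S), ∑ a : A, pol θ' g s a = 1)
    (g : G) (s : S) :
    ∑ a : A, deriv (fun θ' => pol θ' g s a) θ = 0 := by
  have h1 : HasDerivAt (fun θ' => ∑ a : A, pol θ' g s a)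
      (∑ a : A, deriv (fun θ' => pol θ' g s a) θ) θ :=
    HasDerivAt.fun_sum (fun a _ => (hpold g s a).differentiableAt.hasDerivAt)
  have h2 : (fun θ' => ∑ a : A, pol θ' g s a) = fun _ => (1 : ℝ) :=
    funext fun θ' => hpol1 θ' g s
  rw [h2] at h1
  exact h1.unique (hasDerivAt_const θ 1)

/-- The per-decision summand of the derivative of the expected return. -/
noncomputable def Dterm (n : ℕ) (init : S → ℝ) (trans : S → A → S → ℝ) (pol : ℝ → G → S → A → ℝ)
    (θ : ℝ) (r : S → G → ℝ) (g : G) (t : Fin n) (t' : Fin (n + 1)) : ℝ :=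
  ∑ τ : Traj S A n,
    (init (τ.1 0) *
      ((∏ k ∈ Finset.univ.erase t,
          pol θ g (τ.1 k.castSucc) (τ.2 k) * trans (τ.1 k.castSucc) (τ.2 k) (τ.1 k.succ)) *
        (deriv (fun θ' => pol θ' g (τ.1 t.castSucc) (τ.2 t)) θ *
          trans (τ.1 t.castSucc) (τ.2 t) (τ.1 t.succ)))) * r (τ.1 t') g

lemma Dterm_zero (n : ℕ) (init : S → ℝ) (trans : S → A → S → ℝ)
    (pol : ℝ → G → S → A → ℝ) (θ : ℝ) (r : S → G → ℝ)
    (htrans1 : ∀ s a, ∑ s' : S, trans s a s' = 1)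
    (hpold : ∀ (g : G) (s : S) (a : A), Differentiable ℝ fun θ' => pol θ' g s a)
    (hpol1 : ∀ (θ' : ℝ) (g : G) (s : S), ∑ a : A, pol θ' g s a = 1)
    (g : G) (t : Fin n) (t' : Fin (n + 1)) (h : (t' : ℕ) ≤ (t : ℕ)) :
    Dterm n init trans pol θ r g t t' = 0 := by
  set c : Fin n → S → A → S → ℝ := fun k s a s' =>
    (if k = t then deriv (fun θ' => pol θ' g s a) θ else pol θ g s a) * trans s a s' with hc_def
  have hmul : ∀ (p : ℝ) (s : S) (a : A), ∑ s' : S, p * trans s a s' = p := by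
    intro p s a
    rw [← Finset.mul_sum, htrans1, mul_one]
  have hnorm : ∀ k : Fin n, (t : ℕ) < (k : ℕ) → ∀ s : S,
      ∑ a : A, ∑ s' : S, c k s a s' = 1 := by
    intro k hk s
    have hkt : k ≠ t := by
      intro hh; rw [hh] at hk; omega
    simp only [hc_def, if_neg hkt, hmul]
    exact hpol1 θ g s
  have hzero : ∀ k : Fin n, (k : ℕ) = (t : ℕ) → ∀ s : S,
      ∑ a : A, ∑ s' : S, c k s a s' = 0 := by
    intro k hk s
    have hkt : k = t := Fin.ext hk
    simp only [hc_def, if_pos hkt, hmul]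
    exact dpol_sum_zero pol θ hpold hpol1 g s
  have hF : ∀ τ τ' : Traj S A n,
      (∀ j : Fin (n + 1), (j : ℕ) ≤ (t : ℕ) → τ.1 j = τ'.1 j) →
      (∀ k : Fin n, (k : ℕ) < (t : ℕ) → τ.2 k = τ'.2 k) →
      r (τ.1 t') g = r (τ'.1 t') g := by
    intro τ τ' h1 _
    rw [h1 t' h]
  have hz := zero_sum init n (t : ℕ) c t.isLt hnorm hzero (fun τ => r (τ.1 t') g) hF
  rw [trajSum] at hz
  rw [Dterm, ← hz]
  refine Finset.sum_congr rfl fun τ _ => ?_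
  have hp : (∏ k : Fin n, c k (τ.1 k.castSucc) (τ.2 k) (τ.1 k.succ))
      = (deriv (fun θ' => pol θ' g (τ.1 t.castSucc) (τ.2 t)) θ *
          trans (τ.1 t.castSucc) (τ.2 t) (τ.1 t.succ)) *
        ∏ k ∈ Finset.univ.erase t,
          pol θ g (τ.1 k.castSucc) (τ.2 k) * trans (τ.1 k.castSucc) (τ.2 k) (τ.1 k.succ) := by
    rw [← Finset.mul_prod_erase Finset.univ _ (Finset.mem_univ t)]
    congr 1
    · simp only [hc_def, if_pos rfl]
      simp
    · refine Finset.prod_congr rfl fun k hk => ?_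
      simp only [hc_def, if_neg (Finset.ne_of_mem_erase hk)]
  rw [hp]
  ring

lemma Dterm_eq (n : ℕ) (init : S → ℝ) (trans : S → A → S → ℝ)
    (pol : ℝ → G → S → A → ℝ) (θ : ℝ) (r : S → G → ℝ)
    (hpol : ∀ (θ' : ℝ) (g : G) (s : S) (a : A), 0 < pol θ' g s a)
    (hpold : ∀ (g : G) (s : S) (a : A), Differentiable ℝ fun θ' => pol θ' g s a)
    (g : G) (t : Fin n) (t' : Fin (n + 1)) :
    Dterm n init trans pol θ r g t t'
      = ∑ τ : Traj S A n, trajProb n init trans pol θ g τ *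
          (deriv (fun θ'' => Real.log (pol θ'' g (τ.1 t.castSucc) (τ.2 t))) θ *
            r (τ.1 t') g) := by
  rw [Dterm]
  refine Finset.sum_congr rfl fun τ _ => ?_
  rw [dlog pol θ hpol hpold g (τ.1 t.castSucc) (τ.2 t), trajProb,
    ← Finset.mul_prod_erase Finset.univ _ (Finset.mem_univ t)]
  have hne : pol θ g (τ.1 t.castSucc) (τ.2 t) ≠ 0 := (hpol θ g (τ.1 t.castSucc) (τ.2 t)).ne'
  field_simp

lemma eta_deriv [Fintype G] (n : ℕ) (init : S → ℝ) (trans : S → A → S → ℝ)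
    (pol : ℝ → G → S → A → ℝ) (pG : G → ℝ) (r : S → G → ℝ) (θ : ℝ)
    (hpold : ∀ (g : G) (s : S) (a : A), Differentiable ℝ fun θ' => pol θ' g s a) :
    deriv (expReturn n init trans pol pG r) θ
      = ∑ g : G, pG g * ∑ t : Fin n, ∑ t' : Fin (n + 1), Dterm n init trans pol θ r g t t' := by
  classical
  have hD : ∀ (g : G) (τ : Traj S A n),
      HasDerivAt (fun θ' => trajProb n init trans pol θ' g τ)
        (init (τ.1 0) * ∑ t : Fin n,
          (∏ k ∈ Finset.univ.erase t,
            pol θ g (τ.1 k.castSucc) (τ.2 k) * trans (τ.1 k.castSucc) (τ.2 k) (τ.1 k.succ)) •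
            (deriv (fun θ' => pol θ' g (τ.1 t.castSucc) (τ.2 t)) θ *
              trans (τ.1 t.castSucc) (τ.2 t) (τ.1 t.succ))) θ := by
    intro g τ
    have hp := HasDerivAt.fun_finsetProd (u := (Finset.univ : Finset (Fin n)))
      (f := fun (k : Fin n) (θ' : ℝ) =>
        pol θ' g (τ.1 k.castSucc) (τ.2 k) * trans (τ.1 k.castSucc) (τ.2 k) (τ.1 k.succ))
      (f' := fun k => deriv (fun θ' => pol θ' g (τ.1 k.castSucc) (τ.2 k)) θ *
        trans (τ.1 k.castSucc) (τ.2 k) (τ.1 k.succ)) (x := θ)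
      (fun k _ => ((hpold g _ _).differentiableAt.hasDerivAt).mul_const _)
    exact hp.const_mul (init (τ.1 0))
  have hE : HasDerivAt (expReturn n init trans pol pG r)
      (∑ g : G, pG g * ∑ τ : Traj S A n,
        (init (τ.1 0) * ∑ t : Fin n,
          (∏ k ∈ Finset.univ.erase t,
            pol θ g (τ.1 k.castSucc) (τ.2 k) * trans (τ.1 k.castSucc) (τ.2 k) (τ.1 k.succ)) •
            (deriv (fun θ' => pol θ' g (τ.1 t.castSucc) (τ.2 t)) θ *
              trans (τ.1 t.castSucc) (τ.2 t) (τ.1 t.succ))) *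
          ∑ t'' : Fin (n + 1), r (τ.1 t'') g) θ := by
    exact HasDerivAt.fun_sum fun g _ =>
      (HasDerivAt.fun_sum fun τ _ => (hD g τ).mul_const _).const_mul (pG g)
  rw [hE.deriv]
  refine Finset.sum_congr rfl fun g _ => ?_
  congr 1
  have step1 : ∀ τ : Traj S A n,
      (init (τ.1 0) * ∑ t : Fin n,
        (∏ k ∈ Finset.univ.erase t,
          pol θ g (τ.1 k.castSucc) (τ.2 k) * trans (τ.1 k.castSucc) (τ.2 k) (τ.1 k.succ)) •
          (deriv (fun θ' => pol θ' g (τ.1 t.castSucc) (τ.2 t)) θ *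
            trans (τ.1 t.castSucc) (τ.2 t) (τ.1 t.succ))) *
        ∑ t'' : Fin (n + 1), r (τ.1 t'') g
      = ∑ t : Fin n, ∑ t' : Fin (n + 1),
          (init (τ.1 0) *
            ((∏ k ∈ Finset.univ.erase t,
              pol θ g (τ.1 k.castSucc) (τ.2 k) * trans (τ.1 k.castSucc) (τ.2 k) (τ.1 k.succ)) *
              (deriv (fun θ' => pol θ' g (τ.1 t.castSucc) (τ.2 t)) θ *
                trans (τ.1 t.castSucc) (τ.2 t) (τ.1 t.succ)))) * r (τ.1 t') g := by
    intro τ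
    simp only [smul_eq_mul, Finset.mul_sum, Finset.sum_mul]
    rw [Finset.sum_comm]
  rw [Finset.sum_congr rfl fun τ _ => step1 τ, Finset.sum_comm]
  refine Finset.sum_congr rfl fun t _ => ?_
  rw [Finset.sum_comm]
  rfl

end HindsightAux


/-- strong consistency of the weighted per-decision hindsight policy
gradient estimator, in which for each alternative goal `g` and pair of time steps
`(t, t')` the importance weight of trajectory `i` is normalized by the sum of the
corresponding weights over all `N` trajectories. The estimator converges almost surely
to `∇η(θ)` as `N → ∞`. -/
theorem weighted_per_decision_hindsight_estimator_consistent {S A G : Type}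
    [Fintype S] [Fintype A] [Fintype G]
    (n : ℕ) [MeasurableSpace (Traj S A n × G)] [DiscreteMeasurableSpace (Traj S A n × G)]
    {Ω : Type} [MeasurableSpace Ω] (Pm : Measure Ω) [IsProbabilityMeasure Pm]
    (init : S → ℝ) (trans : S → A → S → ℝ) (pol : ℝ → G → S → A → ℝ)
    (pG : G → ℝ) (r : S → G → ℝ)
    (hinit : ∀ s, 0 < init s) (hinit1 : ∑ s : S, init s = 1)
    (htrans : ∀ s a s', 0 < trans s a s') (htrans1 : ∀ s a, ∑ s' : S, trans s a s' = 1)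
    (hpol : ∀ (θ' : ℝ) (g : G) (s : S) (a : A), 0 < pol θ' g s a)
    (hpold : ∀ (g : G) (s : S) (a : A), Differentiable ℝ fun θ' => pol θ' g s a)
    (hpol1 : ∀ (θ' : ℝ) (g : G) (s : S), ∑ a : A, pol θ' g s a = 1)
    (hpG : ∀ g, 0 ≤ pG g) (hpG1 : ∑ g : G, pG g = 1)
    (θ : ℝ) (X : ℕ → Ω → Traj S A n × G)
    (hXm : ∀ i, Measurable (X i))
    (hindep : iIndepFun X Pm)
    (hdist : ∀ i (x : Traj S A n × G),
      Pm.map (X i) {x} = ENNReal.ofReal (pG x.2 * trajProb n init trans pol θ x.2 x.1)) :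
    ∀ᵐ ω ∂Pm, Tendsto
      (fun N : ℕ => ∑ i ∈ Finset.range N,
        ∑ g : G, pG g * ∑ t : Fin n,
          deriv (fun θ'' => Real.log (pol θ'' g ((X i ω).1.1 t.castSucc) ((X i ω).1.2 t))) θ *
            ∑ t' ∈ Finset.univ.filter (fun t' : Fin (n + 1) => t.castSucc < t'),
              ((∏ k : Fin n,
                  if k.castSucc < t' then
                    pol θ g ((X i ω).1.1 k.castSucc) ((X i ω).1.2 k) /
                      pol θ (X i ω).2 ((X i ω).1.1 k.castSucc) ((X i ω).1.2 k)
                  else 1) *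
                r ((X i ω).1.1 t') g) /
              (∑ j ∈ Finset.range N, ∏ k : Fin n,
                  if k.castSucc < t' then
                    pol θ g ((X j ω).1.1 k.castSucc) ((X j ω).1.2 k) /
                      pol θ (X j ω).2 ((X j ω).1.1 k.castSucc) ((X j ω).1.2 k)
                  else 1))
      atTop (nhds (deriv (expReturn n init trans pol pG r) θ)) := by
  classical
  set P : Traj S A n × G → ℝ :=
    fun x => pG x.2 * trajProb n init trans pol θ x.2 x.1 with hP_def
  set sc : G → S → A → ℝ :=
    fun g s a => deriv (fun θ'' => Real.log (pol θ'' g s a)) θ with hsc_def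
  set Wt : G → Fin (n + 1) → Traj S A n × G → ℝ := fun g t' x =>
    ∏ k : Fin n, if k.castSucc < t' then
      pol θ g (x.1.1 k.castSucc) (x.1.2 k) / pol θ x.2 (x.1.1 k.castSucc) (x.1.2 k)
    else 1 with hWt_def
  set NumF : G → Fin n → Fin (n + 1) → Traj S A n × G → ℝ := fun g t t' x =>
    sc g (x.1.1 t.castSucc) (x.1.2 t) * (Wt g t' x * r (x.1.1 t') g) with hNumF_def
  set Tgt : G → Fin n → Fin (n + 1) → ℝ := fun g t t' =>
    ∑ τ : Traj S A n, trajProb n init trans pol θ g τ *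
      (sc g (τ.1 t.castSucc) (τ.2 t) * r (τ.1 t') g) with hTgt_def
  have hptr : ∀ (g : G) (τ : Traj S A n), 0 < trajProb n init trans pol θ g τ := by
    intro g τ
    rw [trajProb]
    exact mul_pos (hinit _) (Finset.prod_pos fun k _ => mul_pos (hpol _ _ _ _) (htrans _ _ _))
  have hPnn : ∀ x, 0 ≤ P x := fun x => mul_nonneg (hpG _) (hptr _ _).le
  -- strong law of large numbers for arbitrary observables
  have hsl : ∀ f : Traj S A n × G → ℝ, ∀ᵐ ω ∂Pm,
      Tendsto (fun N : ℕ => (∑ i ∈ Finset.range N, f (X i ω)) / N) atTop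
        (nhds (∑ x : Traj S A n × G, P x * f x)) := by
    intro f
    have h := HindsightAux.slln_aux Pm X hXm hindep
      (fun i x => (hdist i x).trans (hdist 0 x).symm) f
    have hEq : (∑ x : Traj S A n × G, (Pm.map (X 0) {x}).toReal * f x)
        = ∑ x : Traj S A n × G, P x * f x :=
      Finset.sum_congr rfl fun x _ => by rw [hdist 0 x, ENNReal.toReal_ofReal (hPnn x)]
    exact h.mono fun ω hω => hEq ▸ hω
  have hNum : ∀ᵐ ω ∂Pm, ∀ (g : G) (t : Fin n) (t' : Fin (n + 1)),
      Tendsto (fun N : ℕ => (∑ i ∈ Finset.range N, NumF g t t' (X i ω)) / N) atTop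
        (nhds (∑ x : Traj S A n × G, P x * NumF g t t' x)) := by
    rw [MeasureTheory.ae_all_iff]; intro g
    rw [MeasureTheory.ae_all_iff]; intro t
    rw [MeasureTheory.ae_all_iff]; intro t'
    exact hsl _
  have hDen : ∀ᵐ ω ∂Pm, ∀ (g : G) (t' : Fin (n + 1)),
      Tendsto (fun N : ℕ => (∑ j ∈ Finset.range N, Wt g t' (X j ω)) / N) atTop
        (nhds (∑ x : Traj S A n × G, P x * Wt g t' x)) := by
    rw [MeasureTheory.ae_all_iff]; intro g
    rw [MeasureTheory.ae_all_iff]; intro t'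
    exact hsl _
  -- denominator expectation is 1
  have hDen1 : ∀ (g : G) (t' : Fin (n + 1)),
      (∑ x : Traj S A n × G, P x * Wt g t' x) = 1 := by
    intro g t'
    rw [Fintype.sum_prod_type, Finset.sum_comm]
    have h1 : ∀ g' : G, (∑ τ : Traj S A n, P (τ, g') * Wt g t' (τ, g')) = pG g' := by
      intro g'
      have h2 := HindsightAux.den_one n init trans pol θ hinit1 htrans1 hpol hpol1 g g' t'
      calc (∑ τ : Traj S A n, P (τ, g') * Wt g t' (τ, g'))
          = ∑ τ : Traj S A n, pG g' * (trajProb n init trans pol θ g' τ *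
              (∏ k : Fin n, if k.castSucc < t' then
                pol θ g (τ.1 k.castSucc) (τ.2 k) / pol θ g' (τ.1 k.castSucc) (τ.2 k)
              else 1)) := by
            refine Finset.sum_congr rfl fun τ _ => ?_
            simp only [hP_def, hWt_def]
            ring
        _ = pG g' * 1 := by rw [← Finset.mul_sum, h2]
        _ = pG g' := mul_one _
    rw [Finset.sum_congr rfl fun g' _ => h1 g']
    exact hpG1
  -- numerator expectation
  have hNumT : ∀ (g : G) (t : Fin n) (t' : Fin (n + 1)), t.castSucc < t' →
      (∑ x : Traj S A n × G, P x * NumF g t t' x) = Tgt g t t' := by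
    intro g t t' ht
    have htv : (t : ℕ) < (t' : ℕ) := by simpa [Fin.lt_def] using ht
    rw [Fintype.sum_prod_type, Finset.sum_comm]
    have hF : ∀ τ τ' : Traj S A n,
        (∀ j : Fin (n + 1), (j : ℕ) ≤ (t' : ℕ) → τ.1 j = τ'.1 j) →
        (∀ k : Fin n, (k : ℕ) < (t' : ℕ) → τ.2 k = τ'.2 k) →
        (sc g (τ.1 t.castSucc) (τ.2 t) * r (τ.1 t') g)
          = sc g (τ'.1 t.castSucc) (τ'.2 t) * r (τ'.1 t') g := by
      intro τ τ' h1 h2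
      rw [h1 t.castSucc (by simp; omega), h2 t htv, h1 t' le_rfl]
    have h1 : ∀ g' : G, (∑ τ : Traj S A n, P (τ, g') * NumF g t t' (τ, g'))
        = pG g' * Tgt g t t' := by
      intro g'
      have h2 := HindsightAux.num_eq n init trans pol θ htrans1 hpol hpol1 g g' t'
        (fun τ => sc g (τ.1 t.castSucc) (τ.2 t) * r (τ.1 t') g) hF
      calc (∑ τ : Traj S A n, P (τ, g') * NumF g t t' (τ, g'))
          = ∑ τ : Traj S A n, pG g' * (trajProb n init trans pol θ g' τ *
              (∏ k : Fin n, if k.castSucc < t' then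
                pol θ g (τ.1 k.castSucc) (τ.2 k) / pol θ g' (τ.1 k.castSucc) (τ.2 k)
              else 1) * (sc g (τ.1 t.castSucc) (τ.2 t) * r (τ.1 t') g)) := by
            refine Finset.sum_congr rfl fun τ _ => ?_
            simp only [hP_def, hNumF_def, hWt_def]
            ring
        _ = pG g' * ∑ τ : Traj S A n, trajProb n init trans pol θ g' τ *
              (∏ k : Fin n, if k.castSucc < t' then
                pol θ g (τ.1 k.castSucc) (τ.2 k) / pol θ g' (τ.1 k.castSucc) (τ.2 k)
              else 1) * (sc g (τ.1 t.castSucc) (τ.2 t) * r (τ.1 t') g) := by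
            rw [← Finset.mul_sum]
        _ = pG g' * ∑ τ : Traj S A n, trajProb n init trans pol θ g τ *
              (sc g (τ.1 t.castSucc) (τ.2 t) * r (τ.1 t') g) := by rw [h2]
        _ = pG g' * Tgt g t t' := by rw [hTgt_def]
    rw [Finset.sum_congr rfl fun g' _ => h1 g', ← Finset.sum_mul, hpG1, one_mul]
  -- the derivative of the expected return
  have hEta : deriv (expReturn n init trans pol pG r) θ
      = ∑ g : G, pG g * ∑ t : Fin n,
          ∑ t' ∈ Finset.univ.filter (fun t' : Fin (n + 1) => t.castSucc < t'),
            Tgt g t t' := by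
    rw [HindsightAux.eta_deriv n init trans pol pG r θ hpold]
    refine Finset.sum_congr rfl fun g _ => ?_
    congr 1
    refine Finset.sum_congr rfl fun t _ => ?_
    rw [← Finset.sum_filter_add_sum_filter_not Finset.univ
      (fun t' : Fin (n + 1) => t.castSucc < t')
      (fun t' => HindsightAux.Dterm n init trans pol θ r g t t')]
    have hz : ∑ t' ∈ Finset.univ.filter (fun t' : Fin (n + 1) => ¬ t.castSucc < t'),
        HindsightAux.Dterm n init trans pol θ r g t t' = 0 := by
      refine Finset.sum_eq_zero fun t' ht' => ?_
      have h := (Finset.mem_filter.mp ht').2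
      refine HindsightAux.Dterm_zero n init trans pol θ r htrans1 hpold hpol1 g t t' ?_
      rw [not_lt] at h
      simpa [Fin.le_def] using h
    rw [hz, add_zero]
    refine (Finset.sum_congr rfl fun t' _ => ?_).symm
    rw [HindsightAux.Dterm_eq n init trans pol θ r hpol hpold g t t', hTgt_def, hsc_def]
  -- put everything together
  filter_upwards [hNum, hDen] with ω hNumω hDenω
  rw [hEta]
  have hterm : ∀ (g : G) (t : Fin n) (t' : Fin (n + 1)), t.castSucc < t' →
      Tendsto (fun N : ℕ => (∑ i ∈ Finset.range N, NumF g t t' (X i ω)) /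
          (∑ j ∈ Finset.range N, Wt g t' (X j ω))) atTop (nhds (Tgt g t t')) := by
    intro g t t' ht
    have h1 := hNumω g t t'
    rw [hNumT g t t' ht] at h1
    have h2 := hDenω g t'
    rw [hDen1 g t'] at h2
    have h3 := h1.div h2 one_ne_zero
    rw [div_one] at h3
    refine Filter.Tendsto.congr' ?_ h3
    filter_upwards [Filter.eventually_ge_atTop 1] with N hN
    have hN0 : (N : ℝ) ≠ 0 := Nat.cast_ne_zero.mpr (by omega)
    exact div_div_div_cancel_right₀ hN0 _ _
  have hbig : Tendsto (fun N : ℕ => ∑ g : G, pG g * ∑ t : Fin n,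
      ∑ t' ∈ Finset.univ.filter (fun t' : Fin (n + 1) => t.castSucc < t'),
        (∑ i ∈ Finset.range N, NumF g t t' (X i ω)) /
          (∑ j ∈ Finset.range N, Wt g t' (X j ω))) atTop
      (nhds (∑ g : G, pG g * ∑ t : Fin n,
        ∑ t' ∈ Finset.univ.filter (fun t' : Fin (n + 1) => t.castSucc < t'),
          Tgt g t t')) := by
    refine tendsto_finset_sum _ fun g _ => Filter.Tendsto.const_mul (pG g) ?_
    refine tendsto_finset_sum _ fun t _ => ?_
    exact tendsto_finset_sum _ fun t' ht' => hterm g t t' (Finset.mem_filter.mp ht').2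
  refine hbig.congr fun N => ?_
  -- rearrangement of finite sums
  rw [Finset.sum_comm]
  refine Finset.sum_congr rfl fun g _ => ?_
  rw [← Finset.mul_sum]
  congr 1
  rw [Finset.sum_comm]
  refine Finset.sum_congr rfl fun t _ => ?_
  simp only [Finset.mul_sum]
  rw [Finset.sum_comm]
  refine Finset.sum_congr rfl fun t' _ => ?_
  rw [Finset.sum_div]
  refine Finset.sum_congr rfl fun i _ => ?_
  simp only [hNumF_def, hsc_def, hWt_def]
  rw [mul_div_assoc]
end

section
/- Almost-sure vanishing of the weighted baseline estimator: the estimator Σ_i Σ_g p(g) Σ_{t=1}^{T−1} ∇ log p(a_t^(i)|s_t^(i),g,θ) · w_t^(i)(g) b_t^θ(s_t^(i), g) / Σ_j w_t^(j)(g), where w_t^(i)(g) = ∏_{k=1}^t p(a_k^(i)|s_k^(i),g,θ)/p(a_k^(i)|s_k^(i),g^(i),θ), converges almost surely to the zero vector as N → ∞. -/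
open Finset

open MeasureTheory ProbabilityTheory Filter

section ChainAux

variable {S A : Type} [Fintype S] [Fintype A]

/-- The "chain sum" `∑_τ ν(s_0) ∏_k K_k(s_k, a_k, s_{k+1})`. -/
def chain (m : ℕ) (ν : S → ℝ) (K : Fin m → S → A → S → ℝ) : ℝ :=
  ∑ s : Fin (m + 1) → S, ∑ a : Fin m → A,
    ν (s 0) * ∏ k : Fin m, K k (s k.castSucc) (a k) (s k.succ)

lemma sum_fun_fin_snoc {α : Type} [Fintype α] (m : ℕ) (F : (Fin (m + 1) → α) → ℝ) :
    ∑ f : Fin (m + 1) → α, F f = ∑ f : Fin m → α, ∑ x : α, F (Fin.snoc f x) := by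
  rw [← (Fin.snocEquiv fun _ : Fin (m + 1) => α).sum_comp F, Fintype.sum_prod_type,
    Finset.sum_comm]
  rfl

lemma chain_peel (m : ℕ) (ν : S → ℝ) (K : Fin (m + 1) → S → A → S → ℝ) (c : ℝ)
    (hlast : ∀ s, ∑ a : A, ∑ s' : S, K (Fin.last m) s a s' = c) :
    chain (m + 1) ν K = c * chain m ν fun k => K k.castSucc := by
  unfold chain
  conv_lhs => rw [sum_fun_fin_snoc]
  rw [Finset.mul_sum]
  refine Finset.sum_congr rfl fun s' _ => ?_
  rw [Finset.sum_comm]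
  rw [sum_fun_fin_snoc m (fun a : Fin (m + 1) → A => ∑ sl : S,
    ν ((Fin.snoc s' sl : Fin (m + 2) → S) 0) *
    ∏ k : Fin (m + 1), K k ((Fin.snoc s' sl : Fin (m + 2) → S) k.castSucc) (a k)
      ((Fin.snoc s' sl : Fin (m + 2) → S) k.succ))]
  rw [Finset.mul_sum]
  refine Finset.sum_congr rfl fun a' _ => ?_
  calc ∑ al : A, ∑ sl : S,
        ν ((Fin.snoc s' sl : Fin (m + 2) → S) 0) *
          ∏ k : Fin (m + 1), K k ((Fin.snoc s' sl : Fin (m + 2) → S) k.castSucc)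
            ((Fin.snoc a' al : Fin (m + 1) → A) k)
            ((Fin.snoc s' sl : Fin (m + 2) → S) k.succ)
      = ∑ al : A, ∑ sl : S,
          (ν (s' 0) * ∏ k : Fin m, K k.castSucc (s' k.castSucc) (a' k) (s' k.succ)) *
            K (Fin.last m) (s' (Fin.last m)) al sl := by
        refine Finset.sum_congr rfl fun al _ => Finset.sum_congr rfl fun sl _ => ?_
        rw [Fin.prod_univ_castSucc]
        have e0 : (Fin.snoc s' sl : Fin (m + 2) → S) 0 = s' 0 := by
          rw [show (0 : Fin (m + 2)) = Fin.castSucc 0 from rfl, Fin.snoc_castSucc]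
        have e3 : (Fin.snoc s' sl : Fin (m + 2) → S) (Fin.last m).castSucc = s' (Fin.last m) :=
          Fin.snoc_castSucc ..
        have e4 : (Fin.snoc s' sl : Fin (m + 2) → S) (Fin.last m).succ = sl := by
          rw [Fin.succ_last, Fin.snoc_last]
        have e6 : (Fin.snoc a' al : Fin (m + 1) → A) (Fin.last m) = al := Fin.snoc_last ..
        rw [e0, e3, e4, e6]
        rw [Finset.prod_congr rfl fun (k : Fin m) _ => ?_]
        · ring
        · rw [Fin.succ_castSucc]
          simp only [Fin.snoc_castSucc]
    _ = (ν (s' 0) * ∏ k : Fin m, K k.castSucc (s' k.castSucc) (a' k) (s' k.succ)) *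
          (∑ al : A, ∑ sl : S, K (Fin.last m) (s' (Fin.last m)) al sl) := by
        simp only [← Finset.mul_sum]
    _ = c * (ν (s' 0) * ∏ k : Fin m, K k.castSucc (s' k.castSucc) (a' k) (s' k.succ)) := by
        rw [hlast]; ring

lemma chainA : ∀ (m : ℕ) (ν : S → ℝ) (K : Fin m → S → A → S → ℝ),
    (∀ k s, ∑ a : A, ∑ s' : S, K k s a s' = 1) → chain m ν K = ∑ s : S, ν s := by
  intro m
  induction m with
  | zero =>
    intro ν K _
    unfold chain
    simp only [Finset.univ_unique, Finset.sum_singleton, Finset.univ_eq_empty,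
      Finset.prod_empty, mul_one]
    · exact Fintype.sum_equiv (Equiv.funUnique (Fin 1) S) _ _ fun s => rfl
  | succ m ih =>
    intro ν K hK
    rw [chain_peel m ν K 1 (fun s => hK (Fin.last m) s), one_mul]
    exact ih ν _ fun k s => hK k.castSucc s

lemma chainB : ∀ (m : ℕ) (ν : S → ℝ) (K : Fin m → S → A → S → ℝ) (t : Fin m) (c : ℝ),
    (∀ k, k ≠ t → ∀ s, ∑ a : A, ∑ s' : S, K k s a s' = 1) →
    (∀ s, ∑ a : A, ∑ s' : S, K t s a s' = c) →
    chain m ν K = c * ∑ s : S, ν s := by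
  intro m
  induction m with
  | zero => intro _ _ t; exact t.elim0
  | succ m ih =>
    intro ν K t c h1 hc
    rcases eq_or_ne t (Fin.last m) with rfl | ht
    · rw [chain_peel m ν K c hc]
      congr 1
      exact chainA m ν _ fun k s => h1 k.castSucc (Fin.ne_last_of_lt (Fin.castSucc_lt_last k)) s
    · obtain ⟨t', rfl⟩ := Fin.exists_castSucc_eq.mpr ht
      rw [chain_peel m ν K 1 (fun s => h1 (Fin.last m) ht.symm s), one_mul]
      exact ih ν _ t' c
        (fun k hk s => h1 k.castSucc (by simpa [Fin.castSucc_inj] using hk) s) hc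

end ChainAux

section Fns

variable {S A G : Type}

/-- The importance weight. -/
noncomputable def wFn (n : ℕ) (pol : ℝ → G → S → A → ℝ) (θ : ℝ) (g : G) (t : Fin n)
    (x : Traj S A n × G) : ℝ :=
  ∏ k : Fin n, if k ≤ t then
    pol θ g (x.1.1 k.castSucc) (x.1.2 k) / pol θ x.2 (x.1.1 k.castSucc) (x.1.2 k) else 1

/-- The numerator summand. -/
noncomputable def fFn (n : ℕ) (pol : ℝ → G → S → A → ℝ) (θ : ℝ) (b : Fin n → S → G → ℝ) (g : G)
    (t : Fin n) (x : Traj S A n × G) : ℝ :=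
  deriv (fun θ'' => Real.log (pol θ'' g (x.1.1 t.castSucc) (x.1.2 t))) θ *
    (wFn n pol θ g t x * b t (x.1.1 t.castSucc) g)

end Fns

section Exp

variable {S A G : Type} [Fintype S] [Fintype A] [Fintype G]

/-- Score function sums to zero against the policy. -/
lemma sum_pol_score [Fintype A] (pol : ℝ → G → S → A → ℝ)
    (hpol : ∀ (θ' : ℝ) (g : G) (s : S) (a : A), 0 < pol θ' g s a)
    (hpold : ∀ (g : G) (s : S) (a : A), Differentiable ℝ fun θ' => pol θ' g s a)
    (hpol1 : ∀ (θ' : ℝ) (g : G) (s : S), ∑ a : A, pol θ' g s a = 1)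
    (θ : ℝ) (g : G) (s : S) :
    ∑ a : A, pol θ g s a * deriv (fun θ'' => Real.log (pol θ'' g s a)) θ = 0 := by
  have h1 : ∀ a : A, HasDerivAt (fun θ'' => pol θ'' g s a)
      (deriv (fun θ'' => pol θ'' g s a) θ) θ := fun a => ((hpold g s a) θ).hasDerivAt
  have h2 : ∀ a : A, deriv (fun θ'' => Real.log (pol θ'' g s a)) θ =
      deriv (fun θ'' => pol θ'' g s a) θ / pol θ g s a := fun a =>
    ((h1 a).log (hpol θ g s a).ne').deriv
  have h3 : HasDerivAt (fun θ'' => ∑ a : A, pol θ'' g s a)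
      (∑ a : A, deriv (fun θ'' => pol θ'' g s a) θ) θ := HasDerivAt.fun_sum fun a _ => h1 a
  have h4 : (fun θ'' => ∑ a : A, pol θ'' g s a) = fun _ => (1 : ℝ) :=
    funext fun θ'' => hpol1 θ'' g s
  rw [h4] at h3
  have h5 : ∑ a : A, deriv (fun θ'' => pol θ'' g s a) θ = 0 :=
    ((hasDerivAt_const θ (1 : ℝ)).unique h3).symm
  calc ∑ a : A, pol θ g s a * deriv (fun θ'' => Real.log (pol θ'' g s a)) θ
      = ∑ a : A, deriv (fun θ'' => pol θ'' g s a) θ := by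
        refine Finset.sum_congr rfl fun a _ => ?_
        rw [h2 a, mul_comm, div_mul_cancel₀ _ (hpol θ g s a).ne']
    _ = 0 := h5

/-- The key expectation computation. -/
lemma exp_general (n : ℕ) (init : S → ℝ) (trans : S → A → S → ℝ)
    (pol : ℝ → G → S → A → ℝ) (pG : G → ℝ)
    (hinit1 : ∑ s : S, init s = 1)
    (htrans1 : ∀ s a, ∑ s' : S, trans s a s' = 1)
    (hpol : ∀ (θ' : ℝ) (g : G) (s : S) (a : A), 0 < pol θ' g s a)
    (hpol1 : ∀ (θ' : ℝ) (g : G) (s : S), ∑ a : A, pol θ' g s a = 1)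
    (hpG1 : ∑ g : G, pG g = 1)
    (θ : ℝ) (g : G) (t : Fin n) (E : S → A → ℝ) (c : ℝ)
    (hE : ∀ s, ∑ a : A, pol θ g s a * E s a = c) :
    ∑ x : Traj S A n × G, pG x.2 * trajProb n init trans pol θ x.2 x.1 *
      (wFn n pol θ g t x * E (x.1.1 t.castSucc) (x.1.2 t)) = c := by
  classical
  rw [Fintype.sum_prod_type, Finset.sum_comm]
  have key : ∀ g' : G, ∑ τ : Traj S A n, trajProb n init trans pol θ g' τ *
      (wFn n pol θ g t (τ, g') * E (τ.1 t.castSucc) (τ.2 t)) = c := by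
    intro g'
    set K : Fin n → S → A → S → ℝ := fun k s a s' =>
      (if k ≤ t then pol θ g s a else pol θ g' s a) * trans s a s' *
        (if k = t then E s a else 1) with hK
    have hchain : ∑ τ : Traj S A n, trajProb n init trans pol θ g' τ *
        (wFn n pol θ g t (τ, g') * E (τ.1 t.castSucc) (τ.2 t)) = chain n init K := by
      rw [chain, Fintype.sum_prod_type]
      refine Finset.sum_congr rfl fun s _ => Finset.sum_congr rfl fun a _ => ?_
      have hEfold : E (s t.castSucc) (a t) =
          ∏ k : Fin n, if k = t then E (s k.castSucc) (a k) else 1 := by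
        rw [Finset.prod_ite_eq' Finset.univ t (fun k => E (s k.castSucc) (a k))]
        simp
      rw [trajProb, wFn, hEfold]
      simp only
      rw [mul_assoc, ← Finset.prod_mul_distrib, ← Finset.prod_mul_distrib]
      congr 1
      refine Finset.prod_congr rfl fun k _ => ?_
      simp only [hK]
      by_cases h1 : k ≤ t
      · simp only [if_pos h1]
        have hne := (hpol θ g' (s k.castSucc) (a k)).ne'
        field_simp
      · have h2 : k ≠ t := fun h => h1 (h ▸ le_refl t)
        simp only [if_neg h1, if_neg h2]
        ring
    have hstoch : ∀ k : Fin n, k ≠ t → ∀ s, ∑ a : A, ∑ s' : S, K k s a s' = 1 := by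
      intro k hk s
      simp only [hK, if_neg hk, mul_one]
      by_cases h1 : k ≤ t <;>
        simp only [if_pos, if_neg, h1, ite_true, ite_false, ← Finset.mul_sum, htrans1,
          mul_one, hpol1]
    have hlastk : ∀ s, ∑ a : A, ∑ s' : S, K t s a s' = c := by
      intro s
      simp only [hK, if_pos (le_refl t), ite_true, le_refl]
      calc ∑ a : A, ∑ s' : S, pol θ g s a * trans s a s' * E s a
          = ∑ a : A, pol θ g s a * E s a := by
            refine Finset.sum_congr rfl fun a _ => ?_
            rw [show ∀ x : S → ℝ, (∑ s' : S, pol θ g s a * x s' * E s a) =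
              pol θ g s a * E s a * ∑ s' : S, x s' from fun x => by
                rw [Finset.mul_sum]; exact Finset.sum_congr rfl fun s' _ => by ring]
            rw [htrans1, mul_one]
        _ = c := hE s
    rw [hchain, chainB n init K t c hstoch hlastk, hinit1, mul_one]
  calc ∑ g' : G, ∑ τ : Traj S A n, pG g' * trajProb n init trans pol θ g' τ *
        (wFn n pol θ g t (τ, g') * E (τ.1 t.castSucc) (τ.2 t))
      = ∑ g' : G, pG g' * c := by
        refine Finset.sum_congr rfl fun g' _ => ?_
        rw [← key g', Finset.mul_sum]
        exact Finset.sum_congr rfl fun τ _ => by ring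
    _ = c := by rw [← Finset.sum_mul, hpG1, one_mul]

end Exp

private lemma div_div_same_aux {a b c : ℝ} (hc : c ≠ 0) : a / c / (b / c) = a / b := by
  rcases eq_or_ne b 0 with rfl | hb
  · simp
  · field_simp

/-- almost-sure vanishing of the weighted baseline estimator.
With weights `w_t⁽ⁱ⁾(g) = ∏_{k=1}^{t} p(a_k⁽ⁱ⁾∣s_k⁽ⁱ⁾,g,θ)/p(a_k⁽ⁱ⁾∣s_k⁽ⁱ⁾,g⁽ⁱ⁾,θ)`,
the estimator `∑_i ∑_g p(g) ∑_{t=1}^{T-1} ∇ log p(a_t⁽ⁱ⁾∣s_t⁽ⁱ⁾,g,θ) ⬝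
w_t⁽ⁱ⁾(g) b_t^θ(s_t⁽ⁱ⁾, g) / ∑_j w_t⁽ʲ⁾(g)` converges almost surely to zero as `N → ∞`. -/
theorem weighted_baseline_estimator_vanishes {S A G : Type}
    [Fintype S] [Fintype A] [Fintype G]
    (n : ℕ) [MeasurableSpace (Traj S A n × G)] [DiscreteMeasurableSpace (Traj S A n × G)]
    {Ω : Type} [MeasurableSpace Ω] (Pm : Measure Ω) [IsProbabilityMeasure Pm]
    (init : S → ℝ) (trans : S → A → S → ℝ) (pol : ℝ → G → S → A → ℝ)
    (pG : G → ℝ)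
    (hinit : ∀ s, 0 < init s) (hinit1 : ∑ s : S, init s = 1)
    (htrans : ∀ s a s', 0 < trans s a s') (htrans1 : ∀ s a, ∑ s' : S, trans s a s' = 1)
    (hpol : ∀ (θ' : ℝ) (g : G) (s : S) (a : A), 0 < pol θ' g s a)
    (hpold : ∀ (g : G) (s : S) (a : A), Differentiable ℝ fun θ' => pol θ' g s a)
    (hpol1 : ∀ (θ' : ℝ) (g : G) (s : S), ∑ a : A, pol θ' g s a = 1)
    (hpG : ∀ g, 0 ≤ pG g) (hpG1 : ∑ g : G, pG g = 1)
    (θ : ℝ) (b : Fin n → S → G → ℝ) (X : ℕ → Ω → Traj S A n × G)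
    (hXm : ∀ i, Measurable (X i))
    (hindep : iIndepFun X Pm)
    (hdist : ∀ i (x : Traj S A n × G),
      Pm.map (X i) {x} = ENNReal.ofReal (pG x.2 * trajProb n init trans pol θ x.2 x.1)) :
    ∀ᵐ ω ∂Pm, Tendsto
      (fun N : ℕ => ∑ i ∈ Finset.range N,
        ∑ g : G, pG g * ∑ t : Fin n,
          deriv (fun θ'' => Real.log (pol θ'' g ((X i ω).1.1 t.castSucc) ((X i ω).1.2 t))) θ *
            (((∏ k : Fin n,
                  if k ≤ t then
                    pol θ g ((X i ω).1.1 k.castSucc) ((X i ω).1.2 k) /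
                      pol θ (X i ω).2 ((X i ω).1.1 k.castSucc) ((X i ω).1.2 k)
                  else 1) *
                b t ((X i ω).1.1 t.castSucc) g) /
              (∑ j ∈ Finset.range N, ∏ k : Fin n,
                  if k ≤ t then
                    pol θ g ((X j ω).1.1 k.castSucc) ((X j ω).1.2 k) /
                      pol θ (X j ω).2 ((X j ω).1.1 k.castSucc) ((X j ω).1.2 k)
                  else 1)))
      atTop (nhds 0) := by
  classical
  have hmeas : ∀ (h : Traj S A n × G → ℝ), Measurable h := fun h => Measurable.of_discrete
  have hnn : ∀ x : Traj S A n × G, 0 ≤ pG x.2 * trajProb n init trans pol θ x.2 x.1 := by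
    intro x
    refine mul_nonneg (hpG _) ?_
    unfold trajProb
    exact le_of_lt (mul_pos (hinit _) (Finset.prod_pos fun k _ =>
      mul_pos (hpol _ _ _ _) (htrans _ _ _)))
  -- expectation of any function of a sample
  have hInt : ∀ (h : Traj S A n × G → ℝ) (i : ℕ),
      ∫ ω, h (X i ω) ∂Pm =
        ∑ x : Traj S A n × G, pG x.2 * trajProb n init trans pol θ x.2 x.1 * h x := by
    intro h i
    have hPM : IsProbabilityMeasure (Pm.map (X i)) :=
      Measure.isProbabilityMeasure_map (hXm i).aemeasurable
    rw [← integral_map (hXm i).aemeasurable (hmeas h).aestronglyMeasurable,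
      integral_fintype _]
    refine Finset.sum_congr rfl fun x _ => ?_
    rw [measureReal_def, hdist i x, ENNReal.toReal_ofReal (hnn x), smul_eq_mul]
    exact Integrable.of_finite
  have hident : ∀ i, IdentDistrib (X i) (X 0) Pm Pm := fun i =>
    ⟨(hXm i).aemeasurable, (hXm 0).aemeasurable,
      MeasureTheory.Measure.ext_of_singleton fun x => by rw [hdist i x, hdist 0 x]⟩
  -- strong law for any composed function
  have hslln : ∀ (h : Traj S A n × G → ℝ), ∀ᵐ ω ∂Pm,
      Tendsto (fun N : ℕ => (∑ i ∈ Finset.range N, h (X i ω)) / N) atTop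
        (nhds (∑ x : Traj S A n × G,
          pG x.2 * trajProb n init trans pol θ x.2 x.1 * h x)) := by
    intro h
    have hint : Integrable (fun ω => h (X 0 ω)) Pm := by
      have h1 : Integrable h (Pm.map (X 0)) := by
        have : IsProbabilityMeasure (Pm.map (X 0)) :=
          Measure.isProbabilityMeasure_map (hXm 0).aemeasurable
        exact Integrable.of_finite
      exact (integrable_map_measure (hmeas h).aestronglyMeasurable
        (hXm 0).aemeasurable).mp h1
    have hpind : Pairwise (Function.onFun (IndepFun · · Pm) fun i ω => h (X i ω)) := fun i j hij =>
      (hindep.indepFun hij).comp (hmeas h) (hmeas h)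
    have hpid : ∀ i, IdentDistrib (fun ω => h (X i ω)) (fun ω => h (X 0 ω)) Pm Pm :=
      fun i => (hident i).comp (hmeas h)
    have := strong_law_ae_real (fun i ω => h (X i ω)) hint hpind hpid
    rwa [hInt h 0] at this
  -- expectations of the weight and the numerator function
  have hEw : ∀ (g : G) (t : Fin n),
      ∑ x : Traj S A n × G, pG x.2 * trajProb n init trans pol θ x.2 x.1 *
        wFn n pol θ g t x = 1 := by
    intro g t
    have := exp_general n init trans pol pG hinit1 htrans1 hpol hpol1 hpG1 θ g t
      (fun _ _ => (1 : ℝ)) 1 (fun s => by simp [hpol1 θ g s])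
    simpa using this
  have hEf : ∀ (g : G) (t : Fin n),
      ∑ x : Traj S A n × G, pG x.2 * trajProb n init trans pol θ x.2 x.1 *
        fFn n pol θ b g t x = 0 := by
    intro g t
    have hE : ∀ s : S, ∑ a : A, pol θ g s a *
        (deriv (fun θ'' => Real.log (pol θ'' g s a)) θ * b t s g) = 0 := by
      intro s
      have h1 := sum_pol_score pol hpol hpold hpol1 θ g s
      calc ∑ a : A, pol θ g s a * (deriv (fun θ'' => Real.log (pol θ'' g s a)) θ * b t s g)
          = (∑ a : A, pol θ g s a * deriv (fun θ'' => Real.log (pol θ'' g s a)) θ) *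
              b t s g := by
            rw [Finset.sum_mul]; exact Finset.sum_congr rfl fun a _ => by ring
        _ = 0 := by rw [h1, zero_mul]
    have := exp_general n init trans pol pG hinit1 htrans1 hpol hpol1 hpG1 θ g t
      (fun s a => deriv (fun θ'' => Real.log (pol θ'' g s a)) θ * b t s g) 0 hE
    rw [← this]
    refine Finset.sum_congr rfl fun x _ => ?_
    simp only [fFn]
    ring
  -- almost sure limits for all g, t
  have hkey : ∀ᵐ ω ∂Pm, ∀ g : G, ∀ t : Fin n,
      Tendsto (fun N : ℕ => (∑ i ∈ Finset.range N, fFn n pol θ b g t (X i ω)) / N) atTop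
        (nhds 0) ∧
      Tendsto (fun N : ℕ => (∑ i ∈ Finset.range N, wFn n pol θ g t (X i ω)) / N) atTop
        (nhds 1) := by
    rw [ae_all_iff]
    intro g
    rw [ae_all_iff]
    intro t
    filter_upwards [hslln (fFn n pol θ b g t), hslln (wFn n pol θ g t)] with ω h1 h2
    rw [hEf g t] at h1
    rw [hEw g t] at h2
    exact ⟨h1, h2⟩
  filter_upwards [hkey] with ω hω
  have hrw : ∀ N : ℕ,
      (∑ i ∈ Finset.range N,
        ∑ g : G, pG g * ∑ t : Fin n,
          deriv (fun θ'' => Real.log (pol θ'' g ((X i ω).1.1 t.castSucc) ((X i ω).1.2 t))) θ *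
            (((∏ k : Fin n,
                  if k ≤ t then
                    pol θ g ((X i ω).1.1 k.castSucc) ((X i ω).1.2 k) /
                      pol θ (X i ω).2 ((X i ω).1.1 k.castSucc) ((X i ω).1.2 k)
                  else 1) *
                b t ((X i ω).1.1 t.castSucc) g) /
              (∑ j ∈ Finset.range N, ∏ k : Fin n,
                  if k ≤ t then
                    pol θ g ((X j ω).1.1 k.castSucc) ((X j ω).1.2 k) /
                      pol θ (X j ω).2 ((X j ω).1.1 k.castSucc) ((X j ω).1.2 k)
                  else 1))) =
      ∑ g : G, pG g * ∑ t : Fin n,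
        (∑ i ∈ Finset.range N, fFn n pol θ b g t (X i ω)) /
          (∑ j ∈ Finset.range N, wFn n pol θ g t (X j ω)) := by
    intro N
    rw [Finset.sum_comm]
    refine Finset.sum_congr rfl fun g _ => ?_
    rw [← Finset.mul_sum]
    congr 1
    rw [Finset.sum_comm]
    refine Finset.sum_congr rfl fun t _ => ?_
    rw [Finset.sum_div]
    refine Finset.sum_congr rfl fun i _ => ?_
    simp only [fFn, wFn]
    ring
  have hlim : Tendsto (fun N : ℕ => ∑ g : G, pG g * ∑ t : Fin n,
      (∑ i ∈ Finset.range N, fFn n pol θ b g t (X i ω)) /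
        (∑ j ∈ Finset.range N, wFn n pol θ g t (X j ω))) atTop
      (nhds (∑ g : G, pG g * ∑ t : Fin n, (0 : ℝ))) := by
    refine tendsto_finset_sum _ fun g _ => ?_
    refine Tendsto.const_mul _ (tendsto_finset_sum _ fun t _ => ?_)
    have h1 := (hω g t).1
    have h2 := (hω g t).2
    have h3 : Tendsto (fun N : ℕ =>
        ((∑ i ∈ Finset.range N, fFn n pol θ b g t (X i ω)) / N) /
          ((∑ j ∈ Finset.range N, wFn n pol θ g t (X j ω)) / N)) atTop (nhds 0) := by
      simpa [Pi.div_def] using h1.div h2 one_ne_zero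
    refine Tendsto.congr (fun N => ?_) h3
    rcases Nat.eq_zero_or_pos N with rfl | hN
    · simp
    · exact div_div_same_aux (Nat.cast_ne_zero.mpr hN.ne')
  refine Tendsto.congr (fun N => (hrw N).symm) ?_
  simpa using hlim
end
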